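/- Let S⁽ᵖ⁾_n = Σ_{P ∈ 𝒫(n)} S(P) denote the total Sackin index over all phylogenetic trees on n taxa, and a_n = |𝒫(n)|. Then for all n ≥ 2, S⁽ᵖ⁾_{n+1} + (n+1)·a_{n+1} = 2(n+1)·(S⁽ᵖ⁾_n + n·a_n). -/

import Mathlib

/-- Full binary rooted trees with leaves carrying data of type `α`. -/
inductive BTree (α : Type) : Type
  | leaf (a : α) : BTree α
  | node (l r : BTree α) : BTree α

namespace BTree

/-- Number of leaves below (the subtree rooted at) a node. -/
def leaves {α} : BTree α → ℕ
  | leaf _ => 1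
  | node l r => leaves l + leaves r

/-- Sackin index: sum over internal nodes of the number of leaves below that node. -/
def sackin {α} : BTree α → ℕ
  | leaf _ => 0
  | node l r => (leaves l + leaves r) + sackin l + sackin r

/-- Colless index: sum over internal nodes of the absolute difference of leaf counts
of the two children. -/
def colless {α} : BTree α → ℕ
  | leaf _ => 0
  | node l r => ((leaves l : ℤ) - (leaves r : ℤ)).natAbs + colless l + colless r

/-- Sum over all leaves of their depth (number of edges from the root). -/
def depthSum {α} : BTree α → ℕ
  | leaf _ => 0
  | node l r => (depthSum l + leaves l) + (depthSum r + leaves r)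

/-- Sum of leaf counts `ℓ_T(u)` over all nodes `u` (including leaves, each counting 1). -/
def totalL {α} : BTree α → ℕ
  | leaf _ => 1
  | node l r => (leaves l + leaves r) + totalL l + totalL r

/-- Sum over internal nodes of the minimum of the leaf counts of the two children. -/
def minSum {α} : BTree α → ℕ
  | leaf _ => 0
  | node l r => min (leaves l) (leaves r) + minSum l + minSum r

/-- Number of edges strictly below a node (each node of the subtree other than
its root contributes the edge to its parent). -/
def edgesBelow {α} : BTree α → ℕ
  | leaf _ => 0
  | node l r => 2 + edgesBelow l + edgesBelow r

/-- Number of internal (non-leaf) nodes. -/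
def internals {α} : BTree α → ℕ
  | leaf _ => 0
  | node l r => 1 + internals l + internals r

/-- `Subtree s t` means the subtree `s` occurs in `t`; thus `Subtree (node v w) T`
expresses that `T` has an internal node whose two child subtrees are `v` and `w`. -/
inductive Subtree {α} : BTree α → BTree α → Prop
  | refl (t) : Subtree t t
  | left {s l r} : Subtree s l → Subtree s (node l r)
  | right {s l r} : Subtree s r → Subtree s (node l r)

/-- Generating relation of tree-shape isomorphism: swapping the two children of a node. -/
inductive Rel {α} : BTree α → BTree α → Prop
  | swap (l r) : Rel (node l r) (node r l)
  | congrL {l l'} (r) : Rel l l' → Rel (node l r) (node l' r)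
  | congrR (l) {r r'} : Rel r r' → Rel (node l r) (node l r')

/-- The list of leaf labels, left to right. -/
def leafList {α} : BTree α → List α
  | leaf a => [a]
  | node l r => leafList l ++ leafList r

end BTree

/-- Binary tree shapes: full binary rooted trees up to isomorphism (children unordered). -/
def Shape : Type := Quot (@BTree.Rel Unit)

noncomputable def Shape.leaves (q : Shape) : ℕ := BTree.leaves q.out
noncomputable def Shape.sackin (q : Shape) : ℕ := BTree.sackin q.out
noncomputable def Shape.colless (q : Shape) : ℕ := BTree.colless q.out

/-- `bSh n` = number of binary tree shapes with `n` leaves. -/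
noncomputable def bSh (n : ℕ) : ℕ := Set.ncard {q : Shape | q.leaves = n}

/-- `S_n`: total Sackin index over all tree shapes with `n` leaves. -/
noncomputable def Snum (n : ℕ) : ℕ := ∑ᶠ q ∈ {q : Shape | q.leaves = n}, Shape.sackin q

/-- `D_n = (1/2) Σ_{T ∈ 𝒯(n)} (S(T) - C(T))`. -/
noncomputable def Dnum (n : ℕ) : ℕ :=
  (∑ᶠ q ∈ {q : Shape | q.leaves = n}, (Shape.sackin q - Shape.colless q)) / 2

/-- Phylogenetic trees as labelled full binary rooted trees up to isomorphism. -/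
def PTree : Type := Quot (@BTree.Rel ℕ)

/-- A labelled tree is a phylogenetic tree on `n` taxa if its leaf labels are
exactly `{1, ..., n}`, each occurring once. -/
def BTree.isPhylo (n : ℕ) (t : BTree ℕ) : Prop :=
  (BTree.leafList t).Perm ((List.range n).map (· + 1))

/-- The set `𝒫(n)` of phylogenetic trees on `n` taxa. -/
noncomputable def PhyloSet (n : ℕ) : Set PTree := {q | BTree.isPhylo n q.out}

/-- `a_n = |𝒫(n)|`. -/
noncomputable def aP (n : ℕ) : ℕ := Set.ncard (PhyloSet n)

/-- Total Sackin index over all phylogenetic trees on `n` taxa. -/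
noncomputable def SpTotal (n : ℕ) : ℕ := ∑ᶠ q ∈ PhyloSet n, BTree.sackin (Quot.out q)

/-- All trees obtained from `t` by attaching a new leaf labelled `x` on each of the
`2·leaves t - 1` edges of `t` (including the open edge entering the root). -/
def BTree.attach (x : ℕ) : BTree ℕ → List (BTree ℕ)
  | .leaf a => [.node (.leaf a) (.leaf x)]
  | .node l r =>
      .node (.node l r) (.leaf x) ::
        ((BTree.attach x l).map (fun l' => .node l' r) ++
         (BTree.attach x r).map (fun r' => .node l r'))


namespace BTree

theorem leaves_pos {α : Type} (t : BTree α) : 0 < t.leaves := by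
  induction t with
  | leaf a => simp [leaves]
  | node l r ihl ihr => simp only [leaves]; omega

/-- The multiset of leaf labels. -/
def leafMS {α : Type} (t : BTree α) : Multiset α := (t.leafList : Multiset α)

@[simp] theorem leafMS_leaf {α : Type} (a : α) : leafMS (leaf a) = {a} := rfl

@[simp] theorem leafMS_node {α : Type} (l r : BTree α) :
    leafMS (node l r) = leafMS l + leafMS r := by
  simp [leafMS, leafList]

@[simp] theorem card_leafMS {α : Type} (t : BTree α) :
    Multiset.card (leafMS t) = t.leaves := by
  induction t with
  | leaf a => rfl
  | node l r ihl ihr => simp [leaves, ihl, ihr]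

theorem mem_leafMS {α : Type} {a : α} {t : BTree α} : a ∈ leafMS t ↔ a ∈ leafList t := by
  simp [leafMS]

theorem Rel.leafMS_eq {α : Type} {t t' : BTree α} (h : Rel t t') : leafMS t = leafMS t' := by
  induction h with
  | swap l r => simp [add_comm]
  | congrL r h ih => simp [ih]
  | congrR l h ih => simp [ih]

theorem Rel.leaves_eq {α : Type} {t t' : BTree α} (h : Rel t t') : t.leaves = t'.leaves := by
  rw [← card_leafMS, ← card_leafMS, h.leafMS_eq]

theorem Rel.sackin_eq {α : Type} {t t' : BTree α} (h : Rel t t') : sackin t = sackin t' := by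
  induction h with
  | swap l r => simp only [sackin]; omega
  | congrL r h ih => simp only [sackin, ih, h.leaves_eq]
  | congrR l h ih => simp only [sackin, ih, h.leaves_eq]

theorem Rel.ne_leaf {α : Type} {t t' : BTree α} (h : Rel t t') (a : α) :
    t ≠ leaf a ∧ t' ≠ leaf a := by
  cases h <;> exact ⟨nofun, nofun⟩

end BTree

deriving instance DecidableEq for BTree

namespace BTree

/-- For each occurrence of the leaf `x`, the leaf multiset of its sibling subtree. -/
def sibs (x : ℕ) : BTree ℕ → Multiset (Multiset ℕ)
  | leaf _ => 0
  | node l r =>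
      (if l = leaf x then {leafMS r} else 0) + (if r = leaf x then {leafMS l} else 0)
        + sibs x l + sibs x r

theorem Rel.sibs_eq {x : ℕ} {t t' : BTree ℕ} (h : Rel t t') : sibs x t = sibs x t' := by
  induction h with
  | swap l r => simp only [sibs]; abel
  | congrL r h ih =>
      have h1 := (h.ne_leaf x).1
      have h2 := (h.ne_leaf x).2
      simp only [sibs, if_neg h1, if_neg h2, ih, h.leafMS_eq]
  | congrR l h ih =>
      have h1 := (h.ne_leaf x).1
      have h2 := (h.ne_leaf x).2
      simp only [sibs, if_neg h1, if_neg h2, ih, h.leafMS_eq]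

/-- Remove the leaf labelled `x` (when present exactly once). -/
def detach (x : ℕ) : BTree ℕ → BTree ℕ
  | leaf a => leaf a
  | node l r =>
      if l = leaf x then r else if r = leaf x then l
      else node (detach x l) (detach x r)

end BTree

/-- Attaching a fixed right sibling, on the quotient. -/
def nodeQL (r : BTree ℕ) : PTree → PTree :=
  Quot.lift (fun l => Quot.mk BTree.Rel (BTree.node l r))
    (fun _ _ h => Quot.sound (BTree.Rel.congrL r h))

theorem mk_node_congr_left (r : BTree ℕ) {a b : BTree ℕ}
    (h : Quot.mk BTree.Rel a = Quot.mk BTree.Rel b) :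
    Quot.mk BTree.Rel (BTree.node a r) = Quot.mk BTree.Rel (BTree.node b r) :=
  congrArg (nodeQL r) h

def nodeQR (l : BTree ℕ) : PTree → PTree :=
  Quot.lift (fun r => Quot.mk BTree.Rel (BTree.node l r))
    (fun _ _ h => Quot.sound (BTree.Rel.congrR l h))

theorem mk_node_congr_right (l : BTree ℕ) {a b : BTree ℕ}
    (h : Quot.mk BTree.Rel a = Quot.mk BTree.Rel b) :
    Quot.mk BTree.Rel (BTree.node l a) = Quot.mk BTree.Rel (BTree.node l b) :=
  congrArg (nodeQR l) h

namespace BTree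

theorem Rel.detach_mk {x : ℕ} {t t' : BTree ℕ} (h : Rel t t') :
    Quot.mk Rel (detach x t) = Quot.mk Rel (detach x t') := by
  induction h with
  | swap l r =>
      rcases eq_or_ne l (leaf x) with hl | hl
      · rcases eq_or_ne r (leaf x) with hr | hr
        · subst hl; subst hr; rfl
        · simp [detach, hl, hr]
      · rcases eq_or_ne r (leaf x) with hr | hr
        · simp [detach, hl, hr]
        · simp only [detach, if_neg hl, if_neg hr]
          exact Quot.sound (Rel.swap _ _)
  | congrL r h ih =>
      have h1 := (h.ne_leaf x).1
      have h2 := (h.ne_leaf x).2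
      rcases eq_or_ne r (leaf x) with hr | hr
      · simp only [detach, if_neg h1, if_neg h2, if_pos hr]
        exact Quot.sound h
      · simp only [detach, if_neg h1, if_neg h2, if_neg hr]
        exact mk_node_congr_left _ ih
  | congrR l h ih =>
      have h1 := (h.ne_leaf x).1
      have h2 := (h.ne_leaf x).2
      rcases eq_or_ne l (leaf x) with hl | hl
      · simp only [detach, if_pos hl, if_neg h1, if_neg h2]
        exact Quot.sound h
      · simp only [detach, if_neg hl, if_neg h1, if_neg h2]
        exact mk_node_congr_right _ ih

end BTree

namespace BTree

theorem attach_rel {x : ℕ} {t t' : BTree ℕ} (h : Rel t t') :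
    (((attach x t).map (Quot.mk Rel) : List (Quot (@Rel ℕ))) : Multiset (Quot (@Rel ℕ)))
      = (((attach x t').map (Quot.mk Rel) : List (Quot (@Rel ℕ))) : Multiset (Quot (@Rel ℕ))) := by
  induction h with
  | swap l r =>
      have h1 : Quot.mk Rel (node (node l r) (leaf x)) = Quot.mk Rel (node (node r l) (leaf x)) :=
        Quot.sound (Rel.congrL _ (Rel.swap l r))
      have h2 : (attach x l).map ((Quot.mk Rel) ∘ fun l' => node l' r)
          = (attach x l).map ((Quot.mk Rel) ∘ fun l' => node r l') :=
        List.map_congr_left fun a _ => Quot.sound (Rel.swap a r)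
      have h3 : (attach x r).map ((Quot.mk Rel) ∘ fun r' => node l r')
          = (attach x r).map ((Quot.mk Rel) ∘ fun r' => node r' l) :=
        List.map_congr_left fun a _ => Quot.sound (Rel.swap l a)
      simp only [attach, List.map_cons, List.map_append, List.map_map, h1, h2, h3]
      exact Multiset.coe_eq_coe.2 ((List.perm_append_comm).cons _)
  | congrL r h ih =>
      rename_i a b
      have h1 : Quot.mk Rel (node (node a r) (leaf x)) = Quot.mk Rel (node (node b r) (leaf x)) :=
        Quot.sound (Rel.congrL _ (Rel.congrL r h))
      have h3 : (attach x r).map ((Quot.mk Rel) ∘ fun r' => node a r')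
          = (attach x r).map ((Quot.mk Rel) ∘ fun r' => node b r') :=
        List.map_congr_left fun s _ => Quot.sound (Rel.congrL s h)
      have h2 : (((attach x a).map ((Quot.mk Rel) ∘ fun l' => node l' r) : List (Quot (@Rel ℕ))) : Multiset (Quot (@Rel ℕ)))
          = (((attach x b).map ((Quot.mk Rel) ∘ fun l' => node l' r) : List (Quot (@Rel ℕ))) : Multiset (Quot (@Rel ℕ))) := by
        have e : ((Quot.mk Rel) ∘ fun l' => node l' r) = (nodeQL r) ∘ (Quot.mk Rel) := rfl
        rw [e]
        exact (congrArg ((↑) : List PTree → Multiset PTree)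
          (List.map_map (f := Quot.mk Rel) (g := nodeQL r) (l := attach x a))).symm.trans
          ((congrArg (Multiset.map (nodeQL r)) ih).trans (congrArg ((↑) : List PTree → Multiset PTree)
            (List.map_map (f := Quot.mk Rel) (g := nodeQL r) (l := attach x b))))
      simp only [attach, List.map_cons, List.map_append, List.map_map, h1, h3,
        ← Multiset.cons_coe, ← Multiset.coe_add] at *
      rw [h2]
  | congrR l h ih =>
      rename_i a b
      have h1 : Quot.mk Rel (node (node l a) (leaf x)) = Quot.mk Rel (node (node l b) (leaf x)) :=
        Quot.sound (Rel.congrL _ (Rel.congrR l h))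
      have h3 : (attach x l).map ((Quot.mk Rel) ∘ fun l' => node l' a)
          = (attach x l).map ((Quot.mk Rel) ∘ fun l' => node l' b) :=
        List.map_congr_left fun s _ => Quot.sound (Rel.congrR s h)
      have h2 : (((attach x a).map ((Quot.mk Rel) ∘ fun r' => node l r') : List (Quot (@Rel ℕ))) : Multiset (Quot (@Rel ℕ)))
          = (((attach x b).map ((Quot.mk Rel) ∘ fun r' => node l r') : List (Quot (@Rel ℕ))) : Multiset (Quot (@Rel ℕ))) := by
        have e : ((Quot.mk Rel) ∘ fun r' => node l r') = (nodeQR l) ∘ (Quot.mk Rel) := rfl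
        rw [e]
        exact (congrArg ((↑) : List PTree → Multiset PTree)
          (List.map_map (f := Quot.mk Rel) (g := nodeQR l) (l := attach x a))).symm.trans
          ((congrArg (Multiset.map (nodeQR l)) ih).trans (congrArg ((↑) : List PTree → Multiset PTree)
            (List.map_map (f := Quot.mk Rel) (g := nodeQR l) (l := attach x b))))
      simp only [attach, List.map_cons, List.map_append, List.map_map, h1, h3,
        ← Multiset.cons_coe, ← Multiset.coe_add] at *
      rw [h2]

end BTree

def sackinQ : PTree → ℕ := Quot.lift BTree.sackin fun _ _ h => h.sackin_eq

def leafMSQ : PTree → Multiset ℕ := Quot.lift BTree.leafMS fun _ _ h => h.leafMS_eq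

def sibsQ (x : ℕ) : PTree → Multiset (Multiset ℕ) :=
  Quot.lift (BTree.sibs x) fun _ _ h => h.sibs_eq

def detachQ (x : ℕ) : PTree → PTree :=
  Quot.lift (fun t => Quot.mk BTree.Rel (BTree.detach x t)) fun _ _ h => h.detach_mk

def attachMS (x : ℕ) : PTree → Multiset PTree :=
  Quot.lift (fun t => (((BTree.attach x t).map (Quot.mk BTree.Rel) : List PTree) : Multiset PTree))
    fun _ _ h => BTree.attach_rel h

@[simp] theorem sackinQ_mk (t : BTree ℕ) : sackinQ (Quot.mk BTree.Rel t) = t.sackin := rfl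
@[simp] theorem leafMSQ_mk (t : BTree ℕ) : leafMSQ (Quot.mk BTree.Rel t) = t.leafMS := rfl
@[simp] theorem sibsQ_mk (x : ℕ) (t : BTree ℕ) : sibsQ x (Quot.mk BTree.Rel t) = BTree.sibs x t := rfl
@[simp] theorem detachQ_mk (x : ℕ) (t : BTree ℕ) :
    detachQ x (Quot.mk BTree.Rel t) = Quot.mk BTree.Rel (BTree.detach x t) := rfl
@[simp] theorem attachMS_mk (x : ℕ) (t : BTree ℕ) :
    attachMS x (Quot.mk BTree.Rel t)
      = (((BTree.attach x t).map (Quot.mk BTree.Rel) : List PTree) : Multiset PTree) := rfl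

theorem sackinQ_out (q : PTree) : BTree.sackin q.out = sackinQ q := by
  conv_rhs => rw [← Quot.out_eq q]
  rfl

theorem leafMSQ_out (q : PTree) : BTree.leafMS q.out = leafMSQ q := by
  conv_rhs => rw [← Quot.out_eq q]
  rfl

theorem sibs_eq_of_mk_eq {x : ℕ} {a b : BTree ℕ}
    (h : Quot.mk BTree.Rel a = Quot.mk BTree.Rel b) : BTree.sibs x a = BTree.sibs x b :=
  congrArg (sibsQ x) h

namespace BTree

theorem length_attach (x : ℕ) (t : BTree ℕ) : (attach x t).length + 1 = 2 * t.leaves := by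
  induction t with
  | leaf a => rfl
  | node l r ihl ihr =>
      simp only [attach, List.length_cons, List.length_append, List.length_map, leaves]
      omega

theorem node_self_mem_attach (x : ℕ) (t : BTree ℕ) : node t (leaf x) ∈ attach x t := by
  cases t <;> simp [attach]

theorem mem_attach_isNode {x : ℕ} {t s : BTree ℕ} (hs : s ∈ attach x t) :
    ∃ l r, s = node l r := by
  cases t with
  | leaf a => simp [attach] at hs; exact ⟨_, _, hs⟩
  | node l r =>
      simp only [attach, List.mem_cons, List.mem_append, List.mem_map] at hs
      rcases hs with h | ⟨a, _, h⟩ | ⟨a, _, h⟩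
      · exact ⟨_, _, h⟩
      · exact ⟨_, _, h.symm⟩
      · exact ⟨_, _, h.symm⟩

theorem leafMS_of_mem_attach {x : ℕ} : ∀ {t s : BTree ℕ}, s ∈ attach x t →
    leafMS s = x ::ₘ leafMS t := by
  intro t
  induction t with
  | leaf a =>
      intro s hs
      simp only [attach, List.mem_singleton] at hs
      subst hs
      simp only [leafMS_node, leafMS_leaf]
      rw [add_comm, Multiset.singleton_add]
  | node l r ihl ihr =>
      intro s hs
      simp only [attach, List.mem_cons, List.mem_append, List.mem_map] at hs
      rcases hs with h | ⟨a, ha, h⟩ | ⟨a, ha, h⟩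
      · subst h
        simp only [leafMS_node, leafMS_leaf]
        rw [add_comm, Multiset.singleton_add]
      · subst h
        simp only [leafMS_node, ihl ha]
        rw [Multiset.cons_add]
      · subst h
        simp only [leafMS_node, ihr ha]
        rw [Multiset.add_cons]

theorem leaves_of_mem_attach {x : ℕ} {t s : BTree ℕ} (hs : s ∈ attach x t) :
    s.leaves = t.leaves + 1 := by
  rw [← card_leafMS, ← card_leafMS, leafMS_of_mem_attach hs, Multiset.card_cons]

theorem sum_map_add_const {β : Type} (l : List β) (c : ℕ) (f : β → ℕ) :
    (l.map (fun b => c + f b)).sum = l.length * c + (l.map f).sum := by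
  induction l with
  | nil => simp
  | cons a l ih => simp [ih]; ring

theorem sum_sackin_attach (x : ℕ) (t : BTree ℕ) :
    ((attach x t).map sackin).sum = 2 * (t.leaves + 1) * t.sackin + (t.leaves + 1) := by
  induction t with
  | leaf a => simp [attach, sackin, leaves]
  | node l r ihl ihr =>
      obtain ⟨L, hL, hLen⟩ : ∃ L, l.leaves = L + 1 ∧ (attach x l).length = 2 * L + 1 := by
        have h1 := leaves_pos l
        have h2 := length_attach x l
        exact ⟨l.leaves - 1, by omega, by omega⟩
      obtain ⟨R, hR, hRen⟩ : ∃ R, r.leaves = R + 1 ∧ (attach x r).length = 2 * R + 1 := by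
        have h1 := leaves_pos r
        have h2 := length_attach x r
        exact ⟨r.leaves - 1, by omega, by omega⟩
      have e1 : List.map (sackin ∘ fun l' => node l' r) (attach x l)
          = List.map (fun l' => ((l.leaves + 1 + r.leaves + r.sackin) + sackin l')) (attach x l) :=
        List.map_congr_left fun a ha => by
          simp only [Function.comp, sackin, leaves_of_mem_attach ha]
          try ring
      have e2 : List.map (sackin ∘ fun r' => node l r') (attach x r)
          = List.map (fun r' => ((l.leaves + (r.leaves + 1) + l.sackin) + sackin r')) (attach x r) :=
        List.map_congr_left fun a ha => by
          simp only [Function.comp, sackin, leaves_of_mem_attach ha]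
          try ring
      simp only [attach, List.map_cons, List.map_append, List.map_map, List.sum_cons,
        List.sum_append, e1, e2, sum_map_add_const, ihl, ihr, hLen, hRen]
      simp only [sackin, leaves, hL, hR]
      ring

theorem not_mem_leafList_of_ne {x : ℕ} {t : BTree ℕ} (h : x ∉ leafList t) :
    t ≠ leaf x := by
  intro he; subst he; simp [leafList] at h

theorem sibs_eq_zero {x : ℕ} : ∀ {t : BTree ℕ}, x ∉ leafList t → sibs x t = 0 := by
  intro t
  induction t with
  | leaf a => intro _; rfl
  | node l r ihl ihr =>
      intro h
      simp only [leafList, List.mem_append] at h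
      push_neg at h
      have hl : l ≠ leaf x := not_mem_leafList_of_ne h.1
      have hr : r ≠ leaf x := not_mem_leafList_of_ne h.2
      simp [sibs, hl, hr, ihl h.1, ihr h.2]

theorem detach_not_mem {x : ℕ} : ∀ {t : BTree ℕ}, x ∉ leafList t → detach x t = t := by
  intro t
  induction t with
  | leaf a => intro _; rfl
  | node l r ihl ihr =>
      intro h
      simp only [leafList, List.mem_append] at h
      push_neg at h
      have hl : l ≠ leaf x := not_mem_leafList_of_ne h.1
      have hr : r ≠ leaf x := not_mem_leafList_of_ne h.2
      simp [detach, hl, hr, ihl h.1, ihr h.2]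

theorem detach_attach {x : ℕ} : ∀ {t s : BTree ℕ}, x ∉ leafList t → s ∈ attach x t →
    detach x s = t := by
  intro t
  induction t with
  | leaf a =>
      intro s hx hs
      simp only [attach, List.mem_singleton] at hs
      subst hs
      have ha : leaf a ≠ leaf (α := ℕ) x := not_mem_leafList_of_ne hx
      simp [detach, ha]
  | node l r ihl ihr =>
      intro s hx hs
      simp only [leafList, List.mem_append] at hx
      push_neg at hx
      have hl : l ≠ leaf x := not_mem_leafList_of_ne hx.1
      have hr : r ≠ leaf x := not_mem_leafList_of_ne hx.2
      simp only [attach, List.mem_cons, List.mem_append, List.mem_map] at hs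
      rcases hs with h | ⟨a, ha, h⟩ | ⟨a, ha, h⟩
      · subst h
        simp [detach]
      · subst h
        obtain ⟨u, v, huv⟩ := mem_attach_isNode ha
        have hne : a ≠ leaf x := by rw [huv]; nofun
        simp [detach, hne, hr, ihl hx.1 ha, detach_not_mem hx.2]
      · subst h
        obtain ⟨u, v, huv⟩ := mem_attach_isNode ha
        have hne : a ≠ leaf x := by rw [huv]; nofun
        simp [detach, hne, hl, ihr hx.2 ha, detach_not_mem hx.1]

end BTree

namespace BTree

theorem sibs_of_mem_attach {x : ℕ} : ∀ {t s : BTree ℕ}, x ∉ leafList t → s ∈ attach x t →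
    ∃ m : Multiset ℕ, sibs x s = {m} ∧ m ≤ leafMS t ∧ m ≠ 0 := by
  intro t
  induction t with
  | leaf a =>
      intro s hx hs
      simp only [attach, List.mem_singleton] at hs
      subst hs
      have ha : leaf a ≠ leaf (α := ℕ) x := not_mem_leafList_of_ne hx
      refine ⟨{a}, ?_, le_refl _, by simp⟩
      simp [sibs, ha]
  | node l r ihl ihr =>
      intro s hx hs
      have hxn := hx
      simp only [leafList, List.mem_append] at hx
      push_neg at hx
      have hl : l ≠ leaf x := not_mem_leafList_of_ne hx.1
      have hr : r ≠ leaf x := not_mem_leafList_of_ne hx.2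
      simp only [attach, List.mem_cons, List.mem_append, List.mem_map] at hs
      rcases hs with h | ⟨a, ha, h⟩ | ⟨a, ha, h⟩
      · subst h
        refine ⟨leafMS (node l r), ?_, le_refl _, ?_⟩
        · have hnl : node l r ≠ leaf (α := ℕ) x := nofun
          simp [sibs, hnl, hl, hr, sibs_eq_zero hx.1, sibs_eq_zero hx.2]
        · intro h0
          have hc := congrArg Multiset.card h0
          simp only [card_leafMS, Multiset.card_zero] at hc
          have := leaves_pos (node l r)
          omega
      · subst h
        obtain ⟨u, v, huv⟩ := mem_attach_isNode ha
        have hne : a ≠ leaf x := by rw [huv]; nofun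
        obtain ⟨m, hm1, hm2, hm3⟩ := ihl hx.1 ha
        refine ⟨m, ?_, ?_, hm3⟩
        · simp [sibs, hne, hr, sibs_eq_zero hx.2, hm1]
        · rw [leafMS_node]
          exact le_trans hm2 (Multiset.le_add_right _ _)
      · subst h
        obtain ⟨u, v, huv⟩ := mem_attach_isNode ha
        have hne : a ≠ leaf x := by rw [huv]; nofun
        obtain ⟨m, hm1, hm2, hm3⟩ := ihr hx.2 ha
        refine ⟨m, ?_, ?_, hm3⟩
        · simp [sibs, hne, hl, sibs_eq_zero hx.1, hm1]
        · rw [leafMS_node]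
          exact le_trans hm2 (Multiset.le_add_left _ _)

end BTree

namespace BTree

theorem nodup_map_sibs_attach {x : ℕ} : ∀ {t : BTree ℕ}, x ∉ leafList t →
    (leafList t).Nodup → ((attach x t).map (sibs x)).Nodup := by
  intro t
  induction t with
  | leaf a => intro _ _; simp [attach]
  | node l r ihl ihr =>
      intro hx hnd
      simp only [leafList, List.mem_append] at hx
      push_neg at hx
      have hl : l ≠ leaf x := not_mem_leafList_of_ne hx.1
      have hr : r ≠ leaf x := not_mem_leafList_of_ne hx.2
      rw [leafList, List.nodup_append] at hnd
      obtain ⟨hnl, hnr, hdisj⟩ := hnd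
      have e1 : (attach x l).map (sibs x ∘ fun l' => node l' r) = (attach x l).map (sibs x) :=
        List.map_congr_left fun a ha => by
          obtain ⟨u, v, huv⟩ := mem_attach_isNode ha
          have hne : a ≠ leaf x := by rw [huv]; nofun
          simp [Function.comp, sibs, hne, hr, sibs_eq_zero hx.2]
      have e2 : (attach x r).map (sibs x ∘ fun r' => node l r') = (attach x r).map (sibs x) :=
        List.map_congr_left fun a ha => by
          obtain ⟨u, v, huv⟩ := mem_attach_isNode ha
          have hne : a ≠ leaf x := by rw [huv]; nofun
          simp [Function.comp, sibs, hne, hl, sibs_eq_zero hx.1]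
      have hhead : sibs x (node (node l r) (leaf x)) = {leafMS (node l r)} := by
        have hnlr : node l r ≠ leaf (α := ℕ) x := nofun
        simp [sibs, hnlr, hl, hr, sibs_eq_zero hx.1, sibs_eq_zero hx.2]
      simp only [attach, List.map_cons, List.map_append, List.map_map, e1, e2, hhead,
        List.nodup_cons]
      constructor
      · intro hmem
        rw [List.mem_append] at hmem
        have hRpos := leaves_pos r
        have hLpos := leaves_pos l
        rcases hmem with hm | hm
        · obtain ⟨s, hsmem, hseq⟩ := List.mem_map.1 hm
          obtain ⟨m, h1, h2, _⟩ := sibs_of_mem_attach hx.1 hsmem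
          rw [h1] at hseq
          have hm' : m = leafMS (node l r) := Multiset.singleton_inj.1 hseq
          have hcard := Multiset.card_le_card h2
          rw [hm'] at hcard
          simp only [card_leafMS, leaves] at hcard
          omega
        · obtain ⟨s, hsmem, hseq⟩ := List.mem_map.1 hm
          obtain ⟨m, h1, h2, _⟩ := sibs_of_mem_attach hx.2 hsmem
          rw [h1] at hseq
          have hm' : m = leafMS (node l r) := Multiset.singleton_inj.1 hseq
          have hcard := Multiset.card_le_card h2
          rw [hm'] at hcard
          simp only [card_leafMS, leaves] at hcard
          omega
      · rw [List.nodup_append]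
        refine ⟨ihl hx.1 hnl, ihr hx.2 hnr, ?_⟩
        intro ms hms _ms' hms' heqms; subst heqms
        obtain ⟨s1, hs1, he1⟩ := List.mem_map.1 hms
        obtain ⟨s2, hs2, he2⟩ := List.mem_map.1 hms'
        obtain ⟨m1, a1, b1, c1⟩ := sibs_of_mem_attach hx.1 hs1
        obtain ⟨m2, a2, b2, c2⟩ := sibs_of_mem_attach hx.2 hs2
        rw [a1] at he1
        rw [a2] at he2
        have hm12 : m1 = m2 := Multiset.singleton_inj.1 (he1.trans he2.symm)
        obtain ⟨a, hamem⟩ := Multiset.exists_mem_of_ne_zero c1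
        have hal : a ∈ leafList l := mem_leafMS.1 (Multiset.mem_of_le b1 hamem)
        have har : a ∈ leafList r := mem_leafMS.1 (Multiset.mem_of_le b2 (hm12 ▸ hamem))
        exact hdisj a hal a har rfl

theorem nodup_map_mk_attach {x : ℕ} {t : BTree ℕ} (hx : x ∉ leafList t)
    (hnd : (leafList t).Nodup) : ((attach x t).map (Quot.mk Rel)).Nodup := by
  have h := nodup_map_sibs_attach hx hnd
  rw [List.Nodup, List.pairwise_map] at h ⊢
  exact h.imp fun {a b} hab heq => hab (by rw [sibs_eq_of_mk_eq heq])

theorem exists_attach {x : ℕ} : ∀ {s : BTree ℕ}, x ∈ leafList s → s ≠ leaf x →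
    ∃ t : BTree ℕ, x ::ₘ leafMS t = leafMS s ∧
      Quot.mk Rel s ∈ (attach x t).map (Quot.mk Rel) := by
  intro s
  induction s with
  | leaf a =>
      intro h hne
      simp only [leafList, List.mem_singleton] at h
      subst h
      exact absurd rfl hne
  | node l r ihl ihr =>
      intro h _
      rcases eq_or_ne l (leaf x) with hl | hl
      · subst hl
        refine ⟨r, by simp [Multiset.singleton_add], ?_⟩
        have hsw : Quot.mk Rel (node (leaf x) r) = Quot.mk Rel (node r (leaf x)) :=
          Quot.sound (Rel.swap _ _)
        rw [hsw]
        exact List.mem_map_of_mem (node_self_mem_attach x r)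
      · rcases eq_or_ne r (leaf x) with hr | hr
        · subst hr
          refine ⟨l, ?_, List.mem_map_of_mem (node_self_mem_attach x l)⟩
          simp only [leafMS_node, leafMS_leaf]
          rw [add_comm, Multiset.singleton_add]
        · have h' : x ∈ leafList l ∨ x ∈ leafList r := by
            simpa [leafList] using h
          rcases h' with hx | hx
          · obtain ⟨t, ht1, ht2⟩ := ihl hx hl
            refine ⟨node t r, ?_, ?_⟩
            · simp only [leafMS_node, ← ht1, Multiset.cons_add]
            · obtain ⟨l'', hmem, hmk⟩ := List.mem_map.1 ht2
              have hcongr : Quot.mk Rel (node l r) = Quot.mk Rel (node l'' r) :=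
                (mk_node_congr_left r hmk).symm
              rw [hcongr]
              refine List.mem_map_of_mem ?_
              simp only [attach, List.mem_cons, List.mem_append, List.mem_map]
              exact Or.inr (Or.inl ⟨l'', hmem, rfl⟩)
          · obtain ⟨t, ht1, ht2⟩ := ihr hx hr
            refine ⟨node l t, ?_, ?_⟩
            · simp only [leafMS_node, ← ht1, Multiset.add_cons]
            · obtain ⟨r'', hmem, hmk⟩ := List.mem_map.1 ht2
              have hcongr : Quot.mk Rel (node l r) = Quot.mk Rel (node l r'') :=
                (mk_node_congr_right l hmk).symm
              rw [hcongr]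
              refine List.mem_map_of_mem ?_
              simp only [attach, List.mem_cons, List.mem_append, List.mem_map]
              exact Or.inr (Or.inr ⟨r'', hmem, rfl⟩)

end BTree

/-- The multiset `{1, …, n}`. -/
def phMS (n : ℕ) : Multiset ℕ := (((List.range n).map (· + 1) : List ℕ) : Multiset ℕ)

theorem isPhylo_iff {n : ℕ} {t : BTree ℕ} : BTree.isPhylo n t ↔ BTree.leafMS t = phMS n := by
  rw [BTree.isPhylo, BTree.leafMS, phMS, Multiset.coe_eq_coe]

theorem mem_phyloSet {n : ℕ} {q : PTree} : q ∈ PhyloSet n ↔ leafMSQ q = phMS n := by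
  change BTree.isPhylo n q.out ↔ _
  rw [isPhylo_iff, leafMSQ_out]

@[simp] theorem card_phMS (n : ℕ) : Multiset.card (phMS n) = n := by
  simp [phMS]

theorem phMS_succ (n : ℕ) : phMS (n + 1) = (n + 1) ::ₘ phMS n := by
  rw [phMS, phMS, List.range_succ, List.map_append]
  rw [← Multiset.coe_add, List.map_singleton, add_comm]
  rfl

theorem nodup_phMS (n : ℕ) : (phMS n).Nodup := by
  rw [phMS, Multiset.coe_nodup]
  exact (List.nodup_range (n := n)).map (add_left_injective 1)

theorem mem_phMS {n a : ℕ} : a ∈ phMS n ↔ 1 ≤ a ∧ a ≤ n := by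
  simp only [phMS, Multiset.mem_coe, List.mem_map, List.mem_range]
  constructor
  · rintro ⟨b, hb, rfl⟩; omega
  · intro h; exact ⟨a - 1, by omega, by omega⟩

theorem phylo_step {n : ℕ} (hn : 1 ≤ n) {q' : PTree} (hq' : q' ∈ PhyloSet (n + 1)) :
    ∃ q ∈ PhyloSet n, q' ∈ attachMS (n + 1) q := by
  have hms : BTree.leafMS q'.out = phMS (n + 1) := by
    rw [leafMSQ_out]; exact mem_phyloSet.1 hq'
  have hx : (n + 1) ∈ BTree.leafList q'.out := by
    have : (n + 1) ∈ BTree.leafMS q'.out := by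
      rw [hms]; exact mem_phMS.2 ⟨by omega, le_refl _⟩
    exact BTree.mem_leafMS.1 this
  have hne : q'.out ≠ BTree.leaf (n + 1) := by
    intro h
    have hc := congrArg Multiset.card hms
    rw [h] at hc
    simp at hc
    omega
  obtain ⟨t, ht1, ht2⟩ := BTree.exists_attach hx hne
  refine ⟨Quot.mk BTree.Rel t, ?_, ?_⟩
  · rw [mem_phyloSet (q := Quot.mk BTree.Rel t), leafMSQ_mk]
    have : (n + 1) ::ₘ BTree.leafMS t = (n + 1) ::ₘ phMS n := by
      rw [ht1, hms, phMS_succ]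
    exact (Multiset.cons_inj_right _).1 this
  · rw [attachMS_mk, ← Quot.out_eq q']
    exact Multiset.mem_coe.2 ht2

theorem leafMS_mem_attachMS {x : ℕ} {q q' : PTree} (h : q' ∈ attachMS x q) :
    leafMSQ q' = x ::ₘ leafMSQ q := by
  rw [← Quot.out_eq q, attachMS_mk] at h
  obtain ⟨s, hs, hmk⟩ := List.mem_map.1 (Multiset.mem_coe.1 h)
  rw [← hmk, leafMSQ_mk, BTree.leafMS_of_mem_attach hs, leafMSQ_out]

theorem phyloSet_finite : ∀ n : ℕ, (PhyloSet n).Finite := by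
  intro n
  induction n with
  | zero =>
      apply Set.Finite.subset (Set.finite_empty)
      intro q hq
      exfalso
      have h := mem_phyloSet.1 hq
      have hc := congrArg Multiset.card h
      rw [← leafMSQ_out, BTree.card_leafMS] at hc
      simp only [card_phMS] at hc
      have := BTree.leaves_pos q.out
      omega
  | succ n ih =>
      rcases Nat.eq_zero_or_pos n with rfl | hn
      · apply Set.Finite.subset (Set.finite_singleton (Quot.mk BTree.Rel (BTree.leaf 1)))
        intro q hq
        have h := mem_phyloSet.1 hq
        rw [← leafMSQ_out q] at h
        have : q.out = BTree.leaf 1 := by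
          cases hqo : q.out with
          | leaf a =>
              rw [hqo] at h
              have : a = 1 := by
                simpa [phMS, List.range_succ] using h
              rw [this]
          | node l r =>
              exfalso
              have hc := congrArg Multiset.card h
              rw [hqo] at hc
              simp only [BTree.card_leafMS, card_phMS, BTree.leaves] at hc
              have h1 := BTree.leaves_pos l
              have h2 := BTree.leaves_pos r
              omega
        rw [Set.mem_singleton_iff, ← Quot.out_eq q, this]
      · apply Set.Finite.subset
          (Set.Finite.biUnion ih fun q _ => (attachMS (n + 1) q).finite_toSet)
        intro q' hq'
        obtain ⟨q, hq, hmem⟩ := phylo_step hn hq'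
        exact Set.mem_biUnion hq hmem

theorem phylo_facts {n : ℕ} {q : PTree} (hq : q ∈ PhyloSet n) :
    BTree.leafMS q.out = phMS n ∧ (n + 1) ∉ BTree.leafList q.out ∧
      (BTree.leafList q.out).Nodup ∧ q.out.leaves = n := by
  have h : BTree.leafMS q.out = phMS n := by rw [leafMSQ_out]; exact mem_phyloSet.1 hq
  refine ⟨h, ?_, ?_, ?_⟩
  · intro hmem
    have h1 : (n + 1) ∈ phMS n := h ▸ BTree.mem_leafMS.2 hmem
    have := mem_phMS.1 h1
    omega
  · have h2 := nodup_phMS n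
    rw [← h] at h2
    exact Multiset.coe_nodup.1 h2
  · rw [← BTree.card_leafMS, h, card_phMS]

theorem attachMS_card {n : ℕ} {q : PTree} (hq : q ∈ PhyloSet n) :
    Multiset.card (attachMS (n + 1) q) + 1 = 2 * n := by
  obtain ⟨h1, h2, h3, h4⟩ := phylo_facts hq
  conv_lhs => rw [← Quot.out_eq q]
  rw [attachMS_mk]
  erw [Multiset.coe_card, List.length_map]
  rw [← h4]
  exact BTree.length_attach _ _

theorem attachMS_nodup {n : ℕ} {q : PTree} (hq : q ∈ PhyloSet n) :
    (attachMS (n + 1) q).Nodup := by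
  obtain ⟨h1, h2, h3, h4⟩ := phylo_facts hq
  rw [← Quot.out_eq q, attachMS_mk]
  exact Multiset.coe_nodup.2 (BTree.nodup_map_mk_attach h2 h3)

theorem attachMS_sum_sackin {n : ℕ} {q : PTree} (hq : q ∈ PhyloSet n) :
    ((attachMS (n + 1) q).map sackinQ).sum = 2 * (n + 1) * sackinQ q + (n + 1) := by
  obtain ⟨h1, h2, h3, h4⟩ := phylo_facts hq
  conv_lhs => rw [← Quot.out_eq q]
  erw [attachMS_mk, Multiset.map_coe, List.map_map]
  have he : sackinQ ∘ Quot.mk BTree.Rel = BTree.sackin := rfl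
  rw [he, Multiset.sum_coe, BTree.sum_sackin_attach, h4, ← sackinQ_out]

theorem detachQ_attachMS {n : ℕ} {q q' : PTree} (hq : q ∈ PhyloSet n)
    (h : q' ∈ attachMS (n + 1) q) : detachQ (n + 1) q' = q := by
  obtain ⟨h1, h2, h3, h4⟩ := phylo_facts hq
  rw [← Quot.out_eq q, attachMS_mk] at h
  obtain ⟨s, hs, hmk⟩ := List.mem_map.1 (Multiset.mem_coe.1 h)
  rw [← hmk, detachQ_mk, BTree.detach_attach h2 hs, Quot.out_eq q]

theorem mem_phylo_succ {n : ℕ} {q q' : PTree} (hq : q ∈ PhyloSet n)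
    (h : q' ∈ attachMS (n + 1) q) : q' ∈ PhyloSet (n + 1) := by
  rw [mem_phyloSet, leafMS_mem_attachMS h, phMS_succ, mem_phyloSet.1 hq]

/-- `S⁽ᵖ⁾_{n+1} + (n+1) a_{n+1} = 2(n+1) (S⁽ᵖ⁾_n + n a_n)` for `n ≥ 2`. -/
theorem stmt_14 : ∀ n : ℕ, 2 ≤ n →
    SpTotal (n + 1) + (n + 1) * aP (n + 1) = 2 * (n + 1) * (SpTotal n + n * aP n) := by
  intro n hn
  classical
  have hfinN := phyloSet_finite n
  have hfinN1 := phyloSet_finite (n + 1)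
  set Pn : Finset PTree := hfinN.toFinset with hPn
  set Pn1 : Finset PTree := hfinN1.toFinset with hPn1
  have hmemPn : ∀ q : PTree, q ∈ Pn ↔ q ∈ PhyloSet n := fun q => Set.Finite.mem_toFinset _
  have hmemPn1 : ∀ q : PTree, q ∈ Pn1 ↔ q ∈ PhyloSet (n + 1) := fun q =>
    Set.Finite.mem_toFinset _
  have hcover : Pn1 = Pn.biUnion (fun q => (attachMS (n + 1) q).toFinset) := by
    ext q'
    simp only [Finset.mem_biUnion, Multiset.mem_toFinset, hmemPn, hmemPn1]
    constructor
    · intro h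
      exact phylo_step (by omega) h
    · rintro ⟨q, hq, hmem⟩
      exact mem_phylo_succ hq hmem
  have hdisjPair : ∀ p1 ∈ Pn, ∀ p2 ∈ Pn, p1 ≠ p2 →
      Disjoint ((attachMS (n + 1) p1).toFinset) ((attachMS (n + 1) p2).toFinset) := by
    intro p1 h1 p2 h2 hne
    rw [Finset.disjoint_left]
    intro a ha hb
    rw [Multiset.mem_toFinset] at ha hb
    apply hne
    rw [← detachQ_attachMS ((hmemPn p1).1 h1) ha, ← detachQ_attachMS ((hmemPn p2).1 h2) hb]
  have hdisj : (↑Pn : Set PTree).PairwiseDisjoint (fun q => (attachMS (n + 1) q).toFinset) := by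
    intro p1 h1 p2 h2 hne
    exact hdisjPair p1 (Finset.mem_coe.1 h1) p2 (Finset.mem_coe.1 h2) hne
  have hsum_eq : ∀ f : PTree → ℕ,
      ∑ q' ∈ Pn1, f q' = ∑ q ∈ Pn, ((attachMS (n + 1) q).map f).sum := by
    intro f
    rw [hcover, Finset.sum_biUnion hdisj]
    refine Finset.sum_congr rfl fun q hq => ?_
    have hq' := (hmemPn q).1 hq
    rw [← Multiset.toFinset_eq (attachMS_nodup hq'), Finset.sum_eq_multiset_sum]
  have hSp : ∀ (k : ℕ) (hf : (PhyloSet k).Finite),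
      SpTotal k = ∑ q ∈ hf.toFinset, sackinQ q := by
    intro k hf
    rw [SpTotal, finsum_mem_eq_finite_toFinset_sum _ hf]
    exact Finset.sum_congr rfl fun q _ => sackinQ_out q
  have haP : ∀ (k : ℕ) (hf : (PhyloSet k).Finite), aP k = hf.toFinset.card := by
    intro k hf
    rw [aP, Set.ncard_eq_toFinset_card _ hf]
  have h1 : SpTotal (n + 1) = ∑ q ∈ Pn, (2 * (n + 1) * sackinQ q + (n + 1)) := by
    rw [hSp _ hfinN1, ← hPn1, hsum_eq sackinQ]
    exact Finset.sum_congr rfl fun q hq => attachMS_sum_sackin ((hmemPn q).1 hq)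
  have h2 : aP (n + 1) = ∑ _q ∈ Pn, (2 * n - 1) := by
    rw [haP _ hfinN1, ← hPn1, hcover, Finset.card_biUnion hdisjPair]
    refine Finset.sum_congr rfl fun q hq => ?_
    have hq' := (hmemPn q).1 hq
    rw [Multiset.toFinset_card_of_nodup (attachMS_nodup hq')]
    have := attachMS_card hq'
    omega
  have h3 : SpTotal n = ∑ q ∈ Pn, sackinQ q := hSp _ hfinN
  have h4 : aP n = Pn.card := haP _ hfinN
  rw [h1, h2, h3, h4]
  rw [Finset.sum_add_distrib, ← Finset.mul_sum, Finset.sum_const, Finset.sum_const,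
    smul_eq_mul, smul_eq_mul]
  obtain ⟨m, rfl⟩ : ∃ m, n = m + 2 := ⟨n - 2, by omega⟩
  have hsub : 2 * (m + 2) - 1 = 2 * m + 3 := by omega
  rw [hsub]
  ring
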